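/- Let y* ∈ [2,3], z₀ ∈ [0,1), and let (ρ, ω) be an inner LP-type solution on (z₀, 1]. Then for all z ∈ (z₀, 1): 0 < ρ(z) < 1/(y*·z), |ω(z)| < 1/(y*·z), and the function z ↦ z·ρ(z) has strictly positive derivative at z. -/

import Mathlib

/-- The rescaled self-similar isothermal Euler–Poisson system with parameter `y = y*`,
at the point `z`. -/
def EPSys (y : ℝ) (ρ ω : ℝ → ℝ) (z : ℝ) : Prop :=
  deriv ρ z =
    -(2 * y ^ 2 * z * ω z * ρ z * (ρ z - ω z)) / (1 - y ^ 2 * z ^ 2 * (ω z) ^ 2) ∧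
  deriv ω z =
    (1 - 3 * ω z) / z +
      2 * y ^ 2 * z * (ω z) ^ 2 * (ρ z - ω z) / (1 - y ^ 2 * z ^ 2 * (ω z) ^ 2)

/-- The multiplied form of the system, valid also at the sonic point. -/
def MultSys (y : ℝ) (ρ ω : ℝ → ℝ) (z : ℝ) : Prop :=
  deriv ρ z * (1 - y ^ 2 * z ^ 2 * (ω z) ^ 2)
    + 2 * y ^ 2 * z * ω z * ρ z * (ρ z - ω z) = 0 ∧
  z * deriv ω z * (1 - y ^ 2 * z ^ 2 * (ω z) ^ 2)
    - (1 - 3 * ω z) * (1 - y ^ 2 * z ^ 2 * (ω z) ^ 2)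
    - 2 * y ^ 2 * z ^ 2 * (ω z) ^ 2 * (ρ z - ω z) = 0

/-- An inner LP-type solution on `(z₀, 1]`: continuous on `(z₀,1]`, real analytic on a
left-neighbourhood of `z = 1` where it solves the multiplied system with the LP
conditions, differentiable on `(z₀,1)` where it solves the system, and subsonic there. -/
def InnerLPSol (y z₀ : ℝ) (ρ ω : ℝ → ℝ) : Prop :=
  ContinuousOn ρ (Set.Ioc z₀ 1) ∧ ContinuousOn ω (Set.Ioc z₀ 1) ∧
  (∃ r : ℝ, 0 < r ∧ r < 1 ∧
    AnalyticOnNhd ℝ ρ (Set.Ioc (1 - r) 1) ∧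
    AnalyticOnNhd ℝ ω (Set.Ioc (1 - r) 1) ∧
    (∀ z ∈ Set.Ioc (1 - r) 1, MultSys y ρ ω z)) ∧
  ρ 1 = 1 / y ∧ ω 1 = 1 / y ∧ deriv ρ 1 = -(1 / y) ∧ deriv ω 1 = 1 - 2 / y ∧
  (∀ z ∈ Set.Ioo z₀ 1,
    DifferentiableAt ℝ ρ z ∧ DifferentiableAt ℝ ω z ∧ EPSys y ρ ω z) ∧
  (∀ z ∈ Set.Ioo z₀ 1, 0 < 1 - y ^ 2 * z ^ 2 * (ω z) ^ 2)

open Set Filter Topology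

private lemma quad_pos (a b : ℝ) (hb0 : 0 < b) (hb1 : b < 1) :
    0 < 1 + a ^ 2 - 2 * a * b := by nlinarith [sq_nonneg (a - b)]

private lemma sonic_key (y : ℝ) (ρ ω : ℝ → ℝ) (hy2 : 2 ≤ y)
    (hρa : AnalyticAt ℝ ρ 1) (hωa : AnalyticAt ℝ ω 1)
    (heq : ∀ᶠ z in 𝓝[<] (1:ℝ),
      deriv ρ z * (1 - y ^ 2 * z ^ 2 * ω z ^ 2) + 2 * y ^ 2 * z * ω z * ρ z * (ρ z - ω z) = 0)
    (hρ1 : ρ 1 = 1 / y) (hω1 : ω 1 = 1 / y) (hdρ1 : deriv ρ 1 = -(1 / y))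
    (hdω1 : deriv ω 1 = 1 - 2 / y) :
    0 < 2 - y * deriv (deriv ρ) 1 := by
  have hy0 : (0:ℝ) < y := by linarith
  have hy' : y ≠ 0 := ne_of_gt hy0
  have h1s : (1:ℝ) ∈ {x | AnalyticAt ℝ ρ x} ∩ {x | AnalyticAt ℝ ω x} := ⟨hρa, hωa⟩
  have hso : IsOpen ({x | AnalyticAt ℝ ρ x} ∩ {x | AnalyticAt ℝ ω x}) :=
    (isOpen_analyticAt ℝ ρ).inter (isOpen_analyticAt ℝ ω)
  have hρS : AnalyticOnNhd ℝ ρ ({x | AnalyticAt ℝ ρ x} ∩ {x | AnalyticAt ℝ ω x}) :=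
    fun x hx => hx.1
  have hωS : AnalyticOnNhd ℝ ω ({x | AnalyticAt ℝ ρ x} ∩ {x | AnalyticAt ℝ ω x}) :=
    fun x hx => hx.2
  have hdρS := hρS.deriv
  have hdωS := hωS.deriv
  have hddρS := hdρS.deriv
  -- the multiplied equation as a function
  have hGanal : AnalyticAt ℝ (fun z => deriv ρ z * (1 - y ^ 2 * z ^ 2 * ω z ^ 2)
      + 2 * y ^ 2 * (z * ω z * ρ z * (ρ z - ω z))) 1 := by
    exact ((hdρS 1 h1s).mul (analyticAt_const.sub
        ((analyticAt_const.mul (analyticAt_id.pow 2)).mul (hωa.pow 2)))).add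
      (analyticAt_const.mul (((analyticAt_id.mul hωa).mul hρa).mul (hρa.sub hωa)))
  have hfreq : ∃ᶠ z in 𝓝[≠] (1:ℝ), (fun z => deriv ρ z * (1 - y ^ 2 * z ^ 2 * ω z ^ 2)
      + 2 * y ^ 2 * (z * ω z * ρ z * (ρ z - ω z))) z = 0 := by
    apply Frequently.filter_mono _ (nhdsWithin_mono 1 (fun x (hx : x ∈ Iio 1) => ne_of_lt hx))
    exact (heq.mono (fun z hz => by dsimp only; linear_combination hz)).frequently
  have hGev : ∀ᶠ z in 𝓝 (1:ℝ), (fun z => deriv ρ z * (1 - y ^ 2 * z ^ 2 * ω z ^ 2)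
      + 2 * y ^ 2 * (z * ω z * ρ z * (ρ z - ω z))) z = 0 :=
    (hGanal.frequently_zero_iff_eventually_zero).1 hfreq
  -- first derivative of G
  have hGH : ∀ x ∈ ({x | AnalyticAt ℝ ρ x} ∩ {x | AnalyticAt ℝ ω x}),
      HasDerivAt (fun z => deriv ρ z * (1 - y ^ 2 * z ^ 2 * ω z ^ 2)
        + 2 * y ^ 2 * (z * ω z * ρ z * (ρ z - ω z)))
      (deriv (deriv ρ) x * (1 - y ^ 2 * x ^ 2 * ω x ^ 2)
        + deriv ρ x * (-(y ^ 2 * (2 * x * ω x ^ 2 + 2 * x ^ 2 * (ω x * deriv ω x))))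
        + 2 * y ^ 2 * (((1 * ω x + x * deriv ω x) * ρ x + x * ω x * deriv ρ x) * (ρ x - ω x)
            + x * ω x * ρ x * (deriv ρ x - deriv ω x))) x := by
    intro x hx
    have hρd : HasDerivAt ρ (deriv ρ x) x := hx.1.differentiableAt.hasDerivAt
    have hωd : HasDerivAt ω (deriv ω x) x := hx.2.differentiableAt.hasDerivAt
    have hdρd : HasDerivAt (deriv ρ) (deriv (deriv ρ) x) x :=
      (hdρS x hx).differentiableAt.hasDerivAt
    have hD : HasDerivAt (fun z => 1 - y ^ 2 * z ^ 2 * ω z ^ 2)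
        (-(y ^ 2 * (2 * x * ω x ^ 2 + 2 * x ^ 2 * (ω x * deriv ω x)))) x := by
      have h1 : HasDerivAt (fun z : ℝ => y ^ 2 * z ^ 2) (y ^ 2 * (2 * x)) x := by
        simpa using (hasDerivAt_pow 2 x).const_mul (y ^ 2)
      have h2 : HasDerivAt (fun z => ω z ^ 2) (2 * ω x * deriv ω x) x := by
        simpa using hωd.fun_pow 2
      have h3 := (hasDerivAt_const x (1:ℝ)).fun_sub (h1.fun_mul h2)
      exact h3.congr_deriv (by ring)
    have hA : HasDerivAt (fun z => z * ω z * ρ z * (ρ z - ω z))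
        (((1 * ω x + x * deriv ω x) * ρ x + x * ω x * deriv ρ x) * (ρ x - ω x)
          + x * ω x * ρ x * (deriv ρ x - deriv ω x)) x :=
      (((hasDerivAt_id x).mul hωd).mul hρd).mul (hρd.sub hωd)
    exact (hdρd.mul hD).add (hA.const_mul (2 * y ^ 2))
  -- second derivative vanishes
  have hH0 : deriv (fun x => deriv (deriv ρ) x * (1 - y ^ 2 * x ^ 2 * ω x ^ 2)
      + deriv ρ x * (-(y ^ 2 * (2 * x * ω x ^ 2 + 2 * x ^ 2 * (ω x * deriv ω x))))
      + 2 * y ^ 2 * (((1 * ω x + x * deriv ω x) * ρ x + x * ω x * deriv ρ x) * (ρ x - ω x)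
          + x * ω x * ρ x * (deriv ρ x - deriv ω x))) 1 = 0 := by
    have hGH' : deriv (fun z => deriv ρ z * (1 - y ^ 2 * z ^ 2 * ω z ^ 2)
        + 2 * y ^ 2 * (z * ω z * ρ z * (ρ z - ω z)))
        =ᶠ[𝓝 (1:ℝ)] (fun x => deriv (deriv ρ) x * (1 - y ^ 2 * x ^ 2 * ω x ^ 2)
          + deriv ρ x * (-(y ^ 2 * (2 * x * ω x ^ 2 + 2 * x ^ 2 * (ω x * deriv ω x))))
          + 2 * y ^ 2 * (((1 * ω x + x * deriv ω x) * ρ x + x * ω x * deriv ρ x) * (ρ x - ω x)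
              + x * ω x * ρ x * (deriv ρ x - deriv ω x))) :=
      eventually_of_mem (hso.mem_nhds h1s) (fun x hx => (hGH x hx).deriv)
    have h1 : deriv (fun z => deriv ρ z * (1 - y ^ 2 * z ^ 2 * ω z ^ 2)
        + 2 * y ^ 2 * (z * ω z * ρ z * (ρ z - ω z))) =ᶠ[𝓝 (1:ℝ)] (fun _ => (0:ℝ)) := by
      have h2 : (fun z => deriv ρ z * (1 - y ^ 2 * z ^ 2 * ω z ^ 2)
          + 2 * y ^ 2 * (z * ω z * ρ z * (ρ z - ω z))) =ᶠ[𝓝 (1:ℝ)] (fun _ => (0:ℝ)) := hGev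
      simpa using h2.deriv
    have h3 := hGH'.symm.trans h1
    rw [h3.deriv_eq]
    simp
  -- compute the second derivative explicitly
  have hρd : HasDerivAt ρ (deriv ρ 1) 1 := hρa.differentiableAt.hasDerivAt
  have hωd : HasDerivAt ω (deriv ω 1) 1 := hωa.differentiableAt.hasDerivAt
  have hdρd : HasDerivAt (deriv ρ) (deriv (deriv ρ) 1) 1 :=
    (hdρS 1 h1s).differentiableAt.hasDerivAt
  have hdωd : HasDerivAt (deriv ω) (deriv (deriv ω) 1) 1 :=
    (hdωS 1 h1s).differentiableAt.hasDerivAt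
  have hddρd : HasDerivAt (deriv (deriv ρ)) (deriv (deriv (deriv ρ)) 1) 1 :=
    (hddρS 1 h1s).differentiableAt.hasDerivAt
  have hDd : HasDerivAt (fun z => 1 - y ^ 2 * z ^ 2 * ω z ^ 2)
      (-(y ^ 2 * (2 * 1 * ω 1 ^ 2 + 2 * 1 ^ 2 * (ω 1 * deriv ω 1)))) 1 := by
    have h1 : HasDerivAt (fun z : ℝ => y ^ 2 * z ^ 2) (y ^ 2 * (2 * 1)) 1 := by
      simpa using (hasDerivAt_pow 2 (1:ℝ)).const_mul (y ^ 2)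
    have h2 : HasDerivAt (fun z => ω z ^ 2) (2 * ω 1 * deriv ω 1) 1 := by
      simpa using hωd.fun_pow 2
    have h3 := (hasDerivAt_const (1:ℝ) (1:ℝ)).fun_sub (h1.fun_mul h2)
    exact h3.congr_deriv (by ring)
  have hD2 := ((((((hasDerivAt_id (1:ℝ)).const_mul (2:ℝ)).mul (hωd.pow 2)).add
      (((hasDerivAt_pow 2 (1:ℝ)).const_mul (2:ℝ)).mul (hωd.mul hdωd))).const_mul (y ^ 2)).neg :
    HasDerivAt (fun z => -(y ^ 2 * (2 * z * ω z ^ 2 + 2 * z ^ 2 * (ω z * deriv ω z)))) _ 1)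
  have hA2 := (((((((hasDerivAt_const (1:ℝ) (1:ℝ)).mul hωd).add
        ((hasDerivAt_id (1:ℝ)).mul hdωd)).mul hρd).add
        ((((hasDerivAt_id (1:ℝ)).mul hωd).mul hdρd))).mul (hρd.sub hωd)).add
        (((((hasDerivAt_id (1:ℝ)).mul hωd).mul hρd)).mul (hdρd.sub hdωd)) :
    HasDerivAt (fun z => ((1 * ω z + z * deriv ω z) * ρ z + z * ω z * deriv ρ z) * (ρ z - ω z)
        + z * ω z * ρ z * (deriv ρ z - deriv ω z)) _ 1)
  have hH1 := ((hddρd.mul hDd).add (hdρd.mul hD2)).add (hA2.const_mul (2 * y ^ 2))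
  have hfin := hH1.deriv.symm.trans hH0
  beta_reduce at hfin
  simp only [Pi.mul_apply, Pi.add_apply, Pi.sub_apply, Pi.neg_apply, Pi.pow_apply, id_eq] at hfin
  rw [hρ1, hω1, hdρ1, hdω1] at hfin
  field_simp at hfin
  ring_nf at hfin
  have h46 : 0 < 4 * y - 6 := by linarith
  have hy1 : 0 < (y - 1) ^ 2 := by nlinarith
  have hkey : deriv (deriv ρ) 1 * y * 6 - deriv (deriv ρ) 1 * y ^ 2 * 4
      - 14 + y * 12 - y ^ 2 * 2 = 0 := by
    have h25 : (y ^ 25 : ℝ) ≠ 0 := by positivity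
    apply mul_left_cancel₀ h25
    have e : y * y⁻¹ = 1 := mul_inv_cancel₀ hy'
    linear_combination y ^ 25 * hfin + y ^ 25 * (8 - 4 * y) * e
  nlinarith [hkey, h46, hy1]

private lemma near_one (y : ℝ) (ρ : ℝ → ℝ) (hy0 : 0 < y)
    (hρa : AnalyticAt ℝ ρ 1)
    (hρ1 : ρ 1 = 1 / y) (hdρ1 : deriv ρ 1 = -(1 / y))
    (hc : 0 < 2 - y * deriv (deriv ρ) 1) :
    ∃ zc : ℝ, zc < 1 ∧ ∀ z ∈ Set.Ioo zc 1, y * z * ρ z < 1 := by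
  have hy' : y ≠ 0 := ne_of_gt hy0
  have hso : IsOpen {x | AnalyticAt ℝ ρ x} := isOpen_analyticAt ℝ ρ
  have hρS : AnalyticOnNhd ℝ ρ {x | AnalyticAt ℝ ρ x} := fun x hx => hx
  have hdρS := hρS.deriv
  -- derivative of φ on the analyticity set
  have hφd : ∀ x ∈ {x | AnalyticAt ℝ ρ x}, HasDerivAt (fun z => 1 - y * z * ρ z)
      (-(y * (1 * ρ x + x * deriv ρ x))) x := by
    intro x hx
    have hρd : HasDerivAt ρ (deriv ρ x) x := hx.differentiableAt.hasDerivAt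
    have h1 : HasDerivAt (fun z : ℝ => y * z) (y * 1) x := (hasDerivAt_id x).const_mul y
    have h3 := (hasDerivAt_const x (1:ℝ)).fun_sub (h1.fun_mul hρd)
    exact h3.congr_deriv (by ring)
  -- second derivative of φ at 1
  have hρd : HasDerivAt ρ (deriv ρ 1) 1 := hρa.differentiableAt.hasDerivAt
  have hdρd : HasDerivAt (deriv ρ) (deriv (deriv ρ) 1) 1 :=
    (hdρS 1 hρa).differentiableAt.hasDerivAt
  have hΦd : HasDerivAt (fun x => -(y * (1 * ρ x + x * deriv ρ x)))
      (-(y * (1 * deriv ρ 1 + (1 * deriv ρ 1 + 1 * deriv (deriv ρ) 1)))) 1 :=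
    (((hρd.const_mul 1).add ((hasDerivAt_id (1:ℝ)).mul hdρd)).const_mul y).neg
  have hφc : HasDerivAt (deriv (fun z => 1 - y * z * ρ z))
      (-(y * (1 * deriv ρ 1 + (1 * deriv ρ 1 + 1 * deriv (deriv ρ) 1)))) 1 := by
    apply hΦd.congr_of_eventuallyEq
    exact eventually_of_mem (hso.mem_nhds hρa) fun x hx => ((hφd x hx).deriv)
  have hφ'1 : deriv (fun z => 1 - y * z * ρ z) 1 = 0 := by
    rw [(hφd 1 hρa).deriv, hρ1, hdρ1]; ring
  have hcpos : 0 < -(y * (1 * deriv ρ 1 + (1 * deriv ρ 1 + 1 * deriv (deriv ρ) 1))) := by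
    rw [hdρ1]
    have h2 : -(y * (1 * -(1 / y) + (1 * -(1 / y) + 1 * deriv (deriv ρ) 1)))
        = 2 - y * deriv (deriv ρ) 1 := by field_simp; ring
    rw [h2]; exact hc
  -- slope of deriv φ is eventually positive to the left of 1
  have hslope := hasDerivAt_iff_tendsto_slope.mp hφc
  have hev : ∀ᶠ z in 𝓝[≠] (1:ℝ), 0 < slope (deriv (fun z => 1 - y * z * ρ z)) 1 z :=
    hslope.eventually (eventually_gt_nhds hcpos)
  have hev' : ∀ᶠ z in 𝓝[<] (1:ℝ),
      0 < slope (deriv (fun z => 1 - y * z * ρ z)) 1 z ∧ AnalyticAt ℝ ρ z := by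
    refine Eventually.and ?_ ?_
    · exact hev.filter_mono (nhdsWithin_mono 1 (fun x (hx : x ∈ Iio 1) => ne_of_lt hx))
    · exact (eventually_of_mem (hso.mem_nhds hρa) (fun x hx => hx)).filter_mono nhdsWithin_le_nhds
  obtain ⟨zc, hzc1, hsubI⟩ := mem_nhdsLT_iff_exists_Ioo_subset.mp hev'
  refine ⟨zc, hzc1, ?_⟩
  intro z hz
  have hanti : StrictAntiOn (fun t => 1 - y * t * ρ t) (Icc z 1) := by
    apply strictAntiOn_of_deriv_neg (convex_Icc z 1)
    · intro t ht
      rcases eq_or_lt_of_le ht.2 with h | h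
      · have : ContinuousAt (fun t => 1 - y * t * ρ t) t := by
          have := (h ▸ hρa.continuousAt : ContinuousAt ρ t)
          exact continuousAt_const.sub ((continuousAt_const.mul continuousAt_id).mul this)
        exact this.continuousWithinAt
      · have htm : t ∈ Ioo zc 1 := ⟨lt_of_lt_of_le hz.1 ht.1, h⟩
        have : ContinuousAt (fun t => 1 - y * t * ρ t) t := by
          have := (hsubI htm).2.continuousAt
          exact continuousAt_const.sub ((continuousAt_const.mul continuousAt_id).mul this)
        exact this.continuousWithinAt
    · intro t ht
      rw [interior_Icc] at ht
      have htm : t ∈ Ioo zc 1 := ⟨lt_trans hz.1 ht.1, ht.2⟩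
      obtain ⟨hts, hta⟩ := hsubI htm
      rw [slope_def_field, hφ'1, sub_zero] at hts
      have ht1 : t - 1 < 0 := by linarith [ht.2]
      rcases div_pos_iff.mp hts with ⟨h1, h2⟩ | ⟨h1, h2⟩
      · linarith
      · exact h1
  have hzm : z ∈ Icc z 1 := ⟨le_refl z, hz.2.le⟩
  have h1m : (1:ℝ) ∈ Icc z 1 := ⟨hz.2.le, le_refl 1⟩
  have hlt := hanti hzm h1m hz.2
  have hφ1 : 1 - y * 1 * ρ 1 = 0 := by rw [hρ1]; field_simp; norm_num
  dsimp only at hlt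
  linarith [hlt, hφ1]

/-- A priori bounds for inner LP-type solutions. -/
theorem inner_apriori_bounds
    (y z₀ : ℝ) (hy : y ∈ Set.Icc (2 : ℝ) 3) (hz₀ : z₀ ∈ Set.Ico (0 : ℝ) 1)
    (ρ ω : ℝ → ℝ) (h : InnerLPSol y z₀ ρ ω) :
    ∀ z ∈ Set.Ioo z₀ 1,
      0 < ρ z ∧ ρ z < 1 / (y * z) ∧
      |ω z| < 1 / (y * z) ∧
      0 < deriv (fun t => t * ρ t) z := by
  obtain ⟨hρc, hωc, ⟨r, hr0, hr1, hρa, hωa, hMS⟩, hρ1, hω1, hdρ1, hdω1, hdiff, hsub⟩ := h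
  obtain ⟨hy2, hy3⟩ := hy
  obtain ⟨hz₀0, hz₀1⟩ := hz₀
  have hy0 : (0:ℝ) < y := by linarith
  have hy' : y ≠ 0 := ne_of_gt hy0
  have hρa1 : AnalyticAt ℝ ρ 1 := hρa 1 ⟨by linarith, le_refl 1⟩
  have hωa1 : AnalyticAt ℝ ω 1 := hωa 1 ⟨by linarith, le_refl 1⟩
  -- ρ never vanishes on (z₀, 1)
  have hρne : ∀ z ∈ Ioo z₀ 1, ρ z ≠ 0 := by
    intro z1 hz1 hz1ρ
    have hzero : ∀ b ∈ Ioo z1 1, ρ b = 0 := by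
      intro b hb
      have hz1b : z1 ≤ b := hb.1.le
      have hsubset : Icc z1 b ⊆ Ioo z₀ 1 := fun t ht =>
        ⟨lt_of_lt_of_le hz1.1 ht.1, lt_of_le_of_lt ht.2 hb.2⟩
      have hsubset' : Icc z1 b ⊆ Ioc z₀ 1 := hsubset.trans Ioo_subset_Ioc_self
      have hgc : ContinuousOn
          (fun t => -(2 * y ^ 2 * t * ω t * (ρ t - ω t)) / (1 - y ^ 2 * t ^ 2 * ω t ^ 2))
          (Icc z1 b) := by
        apply ContinuousOn.div
        · exact ((((continuousOn_const.mul continuousOn_id).mul (hωc.mono hsubset')).mul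
            ((hρc.mono hsubset').sub (hωc.mono hsubset'))).neg)
        · exact continuousOn_const.sub ((continuousOn_const.mul (continuousOn_id.pow 2)).mul
            ((hωc.mono hsubset').pow 2))
        · intro t ht
          exact ne_of_gt (hsub t (hsubset ht))
      obtain ⟨C, hC⟩ := (isCompact_Icc).exists_bound_of_continuousOn hgc
      have hgron := norm_le_gronwallBound_of_norm_deriv_right_le
        (f := ρ)
        (f' := fun t => (-(2 * y ^ 2 * t * ω t * (ρ t - ω t)) /
            (1 - y ^ 2 * t ^ 2 * ω t ^ 2)) * ρ t)
        (δ := 0) (K := C) (ε := 0) (a := z1) (b := b)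
        (hρc.mono hsubset') ?_ (by simp [hz1ρ]) ?_
      · have hb0 := hgron b ⟨hz1b, le_refl b⟩
        rw [gronwallBound_ε0] at hb0
        simpa using hb0
      · intro t ht
        have htm : t ∈ Ioo z₀ 1 := hsubset ⟨ht.1, ht.2.le⟩
        obtain ⟨hρd, hωd, hEP⟩ := hdiff t htm
        have heq : deriv ρ t = (-(2 * y ^ 2 * t * ω t * (ρ t - ω t)) /
            (1 - y ^ 2 * t ^ 2 * ω t ^ 2)) * ρ t := by
          rw [hEP.1, div_mul_eq_mul_div]
          ring_nf
        exact (heq ▸ hρd.hasDerivAt).hasDerivWithinAt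
      · intro t ht
        rw [add_zero, norm_mul]
        exact mul_le_mul_of_nonneg_right (hC t ⟨ht.1, ht.2.le⟩) (norm_nonneg _)
    have hct : Tendsto ρ (𝓝[<] (1:ℝ)) (𝓝 (ρ 1)) :=
      hρa1.continuousAt.continuousWithinAt.tendsto
    have hc0 : Tendsto ρ (𝓝[<] (1:ℝ)) (𝓝 0) := by
      have hev0 : (fun _ => (0:ℝ)) =ᶠ[𝓝[<] (1:ℝ)] ρ :=
        eventually_of_mem (Ioo_mem_nhdsLT_of_mem ⟨hz1.2, le_refl 1⟩)
          (fun t ht => (hzero t ht).symm)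
      exact Tendsto.congr' hev0 tendsto_const_nhds
    have h10 : ρ 1 = 0 := tendsto_nhds_unique hct hc0
    rw [hρ1] at h10
    exact (one_div_ne_zero hy') h10
  -- ρ is positive on (z₀, 1)
  have hρpos : ∀ z ∈ Ioo z₀ 1, 0 < ρ z := by
    intro z hz
    rcases (hρne z hz).lt_or_gt with hneg | hpos
    · exfalso
      have hev : ∀ᶠ t in 𝓝[<] (1:ℝ), 0 < ρ t := by
        have h1 : Tendsto ρ (𝓝 1) (𝓝 (ρ 1)) := hρa1.continuousAt
        have h2 : 0 < ρ 1 := by rw [hρ1]; positivity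
        exact (h1.eventually (eventually_gt_nhds h2)).filter_mono nhdsWithin_le_nhds
      have hmm : ∀ᶠ t in 𝓝[<] (1:ℝ), t ∈ Ioo z 1 :=
        eventually_of_mem (Ioo_mem_nhdsLT_of_mem ⟨hz.2, le_refl 1⟩) (fun t ht => ht)
      obtain ⟨t, htρ, htm⟩ := (hev.and hmm).exists
      have hsub2 : Icc z t ⊆ Ioo z₀ 1 := fun u hu =>
        ⟨lt_of_lt_of_le hz.1 hu.1, lt_of_le_of_lt hu.2 htm.2⟩
      have hivt := intermediate_value_Icc htm.1.le (hρc.mono (hsub2.trans Ioo_subset_Ioc_self))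
      obtain ⟨c, hcmem, hc0⟩ := hivt ⟨hneg.le, htρ.le⟩
      exact hρne c (hsub2 hcmem) hc0
    · exact hpos
  -- positivity of the derivative of z ρ(z) under the bounds
  have hdpos : ∀ z ∈ Ioo z₀ 1, 0 < ρ z → y * z * ρ z < 1 →
      0 < deriv (fun t => t * ρ t) z := by
    intro z hz hρ0 hb1
    obtain ⟨hρd, hωd, hEP⟩ := hdiff z hz
    have hD := hsub z hz
    have hDne : (1 - y ^ 2 * z ^ 2 * ω z ^ 2) ≠ 0 := ne_of_gt hD
    have hz0 : 0 < z := lt_of_le_of_lt hz₀0 hz.1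
    have hder : HasDerivAt (fun t => t * ρ t) (1 * ρ z + z * deriv ρ z) z :=
      (hasDerivAt_id z).mul hρd.hasDerivAt
    rw [hder.deriv, hEP.1]
    have hrew : 1 * ρ z + z * (-(2 * y ^ 2 * z * ω z * ρ z * (ρ z - ω z)) /
        (1 - y ^ 2 * z ^ 2 * ω z ^ 2))
        = ρ z * (1 + y ^ 2 * z ^ 2 * ω z ^ 2 - 2 * y ^ 2 * z ^ 2 * (ω z * ρ z)) /
          (1 - y ^ 2 * z ^ 2 * ω z ^ 2) := by
      rw [eq_div_iff hDne, add_mul, mul_assoc z, div_mul_cancel₀ _ hDne]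
      ring
    rw [hrew]
    apply div_pos _ hD
    have hb0 : 0 < y * z * ρ z := mul_pos (mul_pos hy0 hz0) hρ0
    have hQ : 0 < 1 + (y * z * ω z) ^ 2 - 2 * (y * z * ω z) * (y * z * ρ z) :=
      quad_pos _ _ hb0 hb1
    nlinarith [mul_pos hρ0 hQ]
  -- the sonic-point curvature bound and the near-1 estimate
  have hkey : 0 < 2 - y * deriv (deriv ρ) 1 := by
    apply sonic_key y ρ ω hy2 hρa1 hωa1 _ hρ1 hω1 hdρ1 hdω1
    exact eventually_of_mem (Ioo_mem_nhdsLT_of_mem ⟨by linarith, le_refl 1⟩)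
      (fun z hz => (hMS z ⟨hz.1, hz.2.le⟩).1)
  obtain ⟨zc, hzc1, hnear⟩ := near_one y ρ hy0 hρa1 hρ1 hdρ1 hkey
  -- the global bound y z ρ(z) < 1
  have hglobal : ∀ z ∈ Ioo z₀ 1, y * z * ρ z < 1 := by
    intro z hz
    by_cases hzc : zc < z
    · exact hnear z ⟨hzc, hz.2⟩
    push_neg at hzc
    by_contra hcon
    push_neg at hcon
    have hIsub : Icc z zc ⊆ Ioo z₀ 1 := fun t ht =>
      ⟨lt_of_lt_of_le hz.1 ht.1, lt_of_le_of_lt ht.2 hzc1⟩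
    have hBclosed : IsClosed (Icc z zc ∩ (fun t => y * t * ρ t) ⁻¹' (Ici 1)) :=
      ContinuousOn.preimage_isClosed_of_isClosed
        ((continuousOn_const.mul continuousOn_id).mul
          (hρc.mono (hIsub.trans Ioo_subset_Ioc_self))) isClosed_Icc isClosed_Ici
    have hBne : z ∈ Icc z zc ∩ (fun t => y * t * ρ t) ⁻¹' (Ici 1) :=
      ⟨⟨le_refl z, hzc⟩, hcon⟩
    have hBbdd : BddAbove (Icc z zc ∩ (fun t => y * t * ρ t) ⁻¹' (Ici 1)) :=
      ⟨zc, fun t ht => ht.1.2⟩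
    have hmB := hBclosed.csSup_mem ⟨z, hBne⟩ hBbdd
    set m := sSup (Icc z zc ∩ (fun t => y * t * ρ t) ⁻¹' (Ici 1)) with hm
    have hm1 : m < 1 := lt_of_le_of_lt hmB.1.2 hzc1
    have hm0 : z₀ < m := lt_of_lt_of_le hz.1 hmB.1.1
    have hmono : StrictMonoOn (fun t => t * ρ t) (Icc m 1) := by
      apply strictMonoOn_of_deriv_pos (convex_Icc m 1)
      · exact continuousOn_id.mul (hρc.mono (fun t ht => ⟨lt_of_lt_of_le hm0 ht.1, ht.2⟩))
      · intro t ht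
        rw [interior_Icc] at ht
        have htm : t ∈ Ioo z₀ 1 := ⟨lt_trans hm0 ht.1, ht.2⟩
        apply hdpos t htm (hρpos t htm)
        by_cases htzc : zc < t
        · exact hnear t ⟨htzc, ht.2⟩
        · push_neg at htzc
          by_contra hcon2
          push_neg at hcon2
          have htB : t ∈ Icc z zc ∩ (fun t => y * t * ρ t) ⁻¹' (Ici 1) :=
            ⟨⟨le_trans hmB.1.1 ht.1.le, htzc⟩, hcon2⟩
          exact absurd (le_csSup hBbdd htB) (not_le.mpr ht.1)
    have hlt : m * ρ m < 1 * ρ 1 := hmono ⟨le_refl m, hm1.le⟩ ⟨hm1.le, le_refl 1⟩ hm1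
    rw [hρ1] at hlt
    have h2 : (1:ℝ) ≤ y * m * ρ m := hmB.2
    have h3 : y * (1 / y) = 1 := by field_simp
    nlinarith [hlt, h2, h3, hy0]
  -- conclusion
  intro z hz
  have hz0 : 0 < z := lt_of_le_of_lt hz₀0 hz.1
  have hyz : 0 < y * z := mul_pos hy0 hz0
  refine ⟨hρpos z hz, ?_, ?_, hdpos z hz (hρpos z hz) (hglobal z hz)⟩
  · rw [lt_div_iff₀ hyz]
    nlinarith [hglobal z hz]
  · rw [lt_div_iff₀ hyz]
    have hs := hsub z hz
    have ht2 : (|ω z| * (y * z)) ^ 2 < 1 := by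
      rw [mul_pow, mul_pow, sq_abs]
      nlinarith [hs]
    nlinarith [ht2, mul_nonneg (abs_nonneg (ω z)) hyz.le]
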